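/- Fix q > 1. For every τ > 0, the Riemann sum with step size τ strictly exceeds the integral: ∑_{j ∈ ℤ} τ/(1 + (jτ)²)^{q/2} > ∫_ℝ (1 + s²)^{-q/2} ds. -/

import Mathlib

open Real

open scoped ENNReal in
open MeasureTheory Set in
private lemma aux_summable_exp {a : ℝ} (ha : 0 < a) :
    Summable (fun j : ℤ => Real.exp (-a * (j : ℝ) ^ 2)) := by
  have hnat : Summable (fun n : ℕ => Real.exp (-a * (n : ℝ) ^ 2)) := by
    have hgeo : Summable (fun n : ℕ => Real.exp (-a) ^ n) :=
      summable_geometric_of_lt_one (le_of_lt (Real.exp_pos _))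
        (Real.exp_lt_one_iff.mpr (by linarith))
    refine Summable.of_nonneg_of_le (fun n => (Real.exp_pos _).le) (fun n => ?_) hgeo
    rw [← Real.exp_nat_mul]
    apply Real.exp_le_exp.mpr
    have hn : (n : ℝ) ≤ (n : ℝ) ^ 2 := by
      rcases Nat.eq_zero_or_pos n with h | h
      · simp [h]
      · have h1 : (1 : ℝ) ≤ (n : ℝ) := by exact_mod_cast h
        nlinarith
    nlinarith
  apply Summable.of_nat_of_neg
  · exact hnat
  · simpa using hnat

open scoped ENNReal in
open MeasureTheory Set in
private lemma aux_theta {b : ℝ} (hb : 0 < b) :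
    Real.sqrt (π / b) < ∑' j : ℤ, Real.exp (-b * (j : ℝ) ^ 2) := by
  have hbπ : 0 < b / π := div_pos hb pi_pos
  have h := Real.tsum_exp_neg_mul_int_sq hbπ
  have e1 : -π * (b / π) = -b := by field_simp
  have e2 : -π / (b / π) = -(π ^ 2 / b) := by rw [div_div_eq_mul_div]; ring
  rw [e1, e2] at h
  rw [h]
  have hsum2 : Summable (fun n : ℤ => Real.exp (-(π ^ 2 / b) * (n : ℝ) ^ 2)) :=
    aux_summable_exp (by positivity)
  have hgt1 : (1 : ℝ) < ∑' n : ℤ, Real.exp (-(π ^ 2 / b) * (n : ℝ) ^ 2) := by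
    have hle : ∑ j ∈ ({0, 1} : Finset ℤ), Real.exp (-(π ^ 2 / b) * (j : ℝ) ^ 2)
        ≤ ∑' n : ℤ, Real.exp (-(π ^ 2 / b) * (n : ℝ) ^ 2) :=
      Summable.sum_le_tsum _ (fun j _ => (Real.exp_pos _).le) hsum2
    have heq : ∑ j ∈ ({0, 1} : Finset ℤ), Real.exp (-(π ^ 2 / b) * (j : ℝ) ^ 2)
        = 1 + Real.exp (-(π ^ 2 / b)) := by
      rw [Finset.sum_pair (by norm_num)]
      norm_num
    rw [heq] at hle
    nlinarith [Real.exp_pos (-(π ^ 2 / b))]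
  have hcoef : (1 : ℝ) / (b / π) ^ ((1:ℝ)/2) = Real.sqrt (π / b) := by
    rw [one_div, ← Real.inv_rpow hbπ.le, inv_div, Real.sqrt_eq_rpow]
  rw [hcoef]
  have hpos : 0 < Real.sqrt (π / b) := Real.sqrt_pos.mpr (div_pos pi_pos hb)
  nlinarith

open scoped ENNReal in
open MeasureTheory Set in
private lemma aux_int {a c : ℝ} (ha : 0 < a) (hc : 0 < c) :
    IntegrableOn (fun u : ℝ => u ^ (a - 1) * Real.exp (-(c * u))) (Ioi 0) := by
  have h := integrableOn_rpow_mul_exp_neg_mul_rpow (p := 1) (s := a - 1) (b := c)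
    (by linarith) one_pos hc
  simpa [Real.rpow_one, neg_mul] using h

open scoped ENNReal in
open MeasureTheory Set in
private lemma aux_gamma_rep {a c : ℝ} (ha : 0 < a) (hc : 0 < c) :
    c ^ (-a) = (Real.Gamma a)⁻¹ * ∫ u in Ioi (0:ℝ), u ^ (a - 1) * Real.exp (-(c * u)) := by
  rw [integral_rpow_mul_exp_neg_mul_Ioi ha hc]
  rw [one_div, Real.inv_rpow hc.le, ← Real.rpow_neg hc.le]
  have hΓ : 0 < Real.Gamma a := Real.Gamma_pos_of_pos ha
  field_simp

open scoped ENNReal in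
open MeasureTheory Set in
private lemma aux_summable_main (q : ℝ) (hq : 1 < q) (τ : ℝ) (hτ : 0 < τ) :
    Summable (fun j : ℤ => τ / (1 + ((j : ℝ) * τ) ^ 2) ^ (q / 2)) := by
  have hbase : Summable (fun j : ℤ => τ ^ (1 - q) * |(j : ℝ)| ^ (-q)) :=
    (summable_abs_int_rpow hq).mul_left _
  have hupd : Summable (Function.update (fun j : ℤ => τ ^ (1 - q) * |(j : ℝ)| ^ (-q)) 0 τ) :=
    hbase.update 0 τ
  refine Summable.of_nonneg_of_le (fun j => by positivity) (fun j => ?_) hupd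
  rcases eq_or_ne j 0 with rfl | hj
  · simp [Function.update_self]
  · rw [Function.update_of_ne hj]
    have hjabs : (1 : ℝ) ≤ |(j : ℝ)| := by
      rw [← Int.cast_abs]
      exact_mod_cast Int.one_le_abs (by simpa using hj)
    have hjpos : (0 : ℝ) < |(j : ℝ)| := by linarith
    have hkey : (|(j : ℝ)| * τ) ^ q ≤ (1 + ((j : ℝ) * τ) ^ 2) ^ (q / 2) := by
      have h0 : ((j : ℝ) * τ) ^ 2 = (|(j : ℝ)| * τ) ^ 2 := by
        rw [mul_pow, mul_pow, sq_abs]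
      have h1 : (|(j : ℝ)| * τ) ^ q = (((j : ℝ) * τ) ^ 2) ^ (q / 2) := by
        rw [h0, ← Real.rpow_natCast (|(j:ℝ)| * τ) 2, ← Real.rpow_mul (by positivity)]
        congr 1
        ring
      rw [h1]
      exact Real.rpow_le_rpow (by positivity) (by nlinarith [sq_nonneg ((j:ℝ)*τ)]) (by positivity)
    have hd1 : (0 : ℝ) < (|(j : ℝ)| * τ) ^ q := by positivity
    have hstep : τ / (1 + ((j : ℝ) * τ) ^ 2) ^ (q / 2) ≤ τ / (|(j : ℝ)| * τ) ^ q :=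
      div_le_div_of_nonneg_left hτ.le hd1 hkey
    refine hstep.trans (le_of_eq ?_)
    rw [mul_rpow (abs_nonneg _) hτ.le, Real.rpow_neg (abs_nonneg _),
      Real.rpow_sub hτ, Real.rpow_one]
    rw [div_mul_eq_div_div_swap, div_eq_mul_inv (τ / τ ^ q)]

open scoped ENNReal in
open MeasureTheory Set in
/-- For `q > 1` and every `τ > 0`, the Riemann sum with step `τ` strictly exceeds the
integral: `∑_{j ∈ ℤ} τ/(1 + (jτ)²)^{q/2} > ∫_ℝ (1 + s²)^{-q/2} ds`. -/
theorem stmt_7 (q : ℝ) (hq : 1 < q) (τ : ℝ) (hτ : 0 < τ) :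
    Summable (fun j : ℤ => τ / (1 + (j * τ) ^ 2) ^ (q / 2)) ∧
      (∫ s : ℝ, (1 + s ^ 2) ^ (-q / 2)) <
        ∑' j : ℤ, τ / (1 + (j * τ) ^ 2) ^ (q / 2) := by
  have hq2 : 0 < q / 2 := by linarith
  have hΓpos : 0 < Real.Gamma (q / 2) := Real.Gamma_pos_of_pos hq2
  set Γi : ℝ := (Real.Gamma (q / 2))⁻¹ with hΓidef
  have hΓi : 0 ≤ Γi := by positivity
  have hΓipos : 0 < Γi := by positivity
  have hSummable := aux_summable_main q hq τ hτ
  refine ⟨hSummable, ?_⟩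
  -- abbreviations
  set IA : ℝ≥0∞ := ∫⁻ u in Ioi (0:ℝ),
      ENNReal.ofReal (u ^ (q/2 - 1) * Real.exp (-u) * Real.sqrt (π / u)) with hIAdef
  set IS : ℝ≥0∞ := ∫⁻ u in Ioi (0:ℝ), ∑' j : ℤ,
      ENNReal.ofReal (τ * (u ^ (q/2 - 1) *
        Real.exp (-((1 + ((j:ℝ) * τ) ^ 2) * u)))) with hISdef
  -- the A side
  have hA' : (∫⁻ s : ℝ, ENNReal.ofReal ((1 + s ^ 2) ^ (-q / 2)))
      = ENNReal.ofReal Γi * IA := by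
    set Γi2 : ℝ := (Real.Gamma (q / 2))⁻¹ with hΓi2def
    have hint : ∀ s : ℝ, IntegrableOn
        (fun u : ℝ => u ^ (q/2 - 1) * Real.exp (-((1 + s ^ 2) * u))) (Ioi 0) := by
      intro s
      exact aux_int hq2 (by positivity)
    have hnn : ∀ s : ℝ, (0 : ℝ → ℝ) ≤ᵐ[volume.restrict (Ioi 0)]
        (fun u : ℝ => u ^ (q/2 - 1) * Real.exp (-((1 + s ^ 2) * u))) := by
      intro s
      refine (ae_restrict_iff' measurableSet_Ioi).mpr (Filter.Eventually.of_forall fun u hu => ?_)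
      have : (0:ℝ) < u := hu
      positivity
    have hrep : ∀ s : ℝ, (1 + s ^ 2) ^ (-q / 2)
        = Γi * ∫ u in Ioi (0:ℝ), u ^ (q/2 - 1) * Real.exp (-((1 + s ^ 2) * u)) := by
      intro s
      rw [neg_div]
      exact aux_gamma_rep hq2 (by positivity)
    have hmeas : AEMeasurable (Function.uncurry fun (s u : ℝ) =>
        ENNReal.ofReal (u ^ (q/2 - 1) * Real.exp (-((1 + s ^ 2) * u))))
        (volume.prod (volume.restrict (Ioi 0))) := by
      apply Measurable.aemeasurable
      apply ENNReal.measurable_ofReal.comp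
      fun_prop
    calc (∫⁻ s : ℝ, ENNReal.ofReal ((1 + s ^ 2) ^ (-q / 2)))
        = ∫⁻ s : ℝ, ENNReal.ofReal Γi * ∫⁻ u in Ioi (0:ℝ),
            ENNReal.ofReal (u ^ (q/2 - 1) * Real.exp (-((1 + s ^ 2) * u))) := by
          refine lintegral_congr fun s => ?_
          rw [hrep s, ENNReal.ofReal_mul hΓi,
            ofReal_integral_eq_lintegral_ofReal (hint s) (hnn s)]
      _ = ENNReal.ofReal Γi * ∫⁻ s : ℝ, ∫⁻ u in Ioi (0:ℝ),
            ENNReal.ofReal (u ^ (q/2 - 1) * Real.exp (-((1 + s ^ 2) * u))) :=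
          lintegral_const_mul' _ _ ENNReal.ofReal_ne_top
      _ = ENNReal.ofReal Γi * ∫⁻ u in Ioi (0:ℝ), ∫⁻ s : ℝ,
            ENNReal.ofReal (u ^ (q/2 - 1) * Real.exp (-((1 + s ^ 2) * u))) := by
          rw [lintegral_lintegral_swap hmeas]
      _ = ENNReal.ofReal Γi * IA := by
          congr 1
          refine setLIntegral_congr_fun measurableSet_Ioi
            (fun u hu => ?_)
          have hu0 : (0:ℝ) < u := hu
          have hdecomp : ∀ s : ℝ, u ^ (q/2 - 1) * Real.exp (-((1 + s ^ 2) * u))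
              = (u ^ (q/2 - 1) * Real.exp (-u)) * Real.exp (-u * s ^ 2) := by
            intro s
            rw [show -((1 + s ^ 2) * u) = -u + -u * s ^ 2 by ring, Real.exp_add]
            ring
          simp_rw [hdecomp, ENNReal.ofReal_mul (by positivity :
            (0:ℝ) ≤ u ^ (q/2 - 1) * Real.exp (-u))]
          rw [lintegral_const_mul' _ _ ENNReal.ofReal_ne_top,
            ← ofReal_integral_eq_lintegral_ofReal (integrable_exp_neg_mul_sq hu0)
              (Filter.Eventually.of_forall fun s => (Real.exp_pos _).le),
            integral_gaussian, ← ENNReal.ofReal_mul (by positivity), mul_assoc]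
  have hS' : (∑' j : ℤ, ENNReal.ofReal (τ / (1 + ((j:ℝ) * τ) ^ 2) ^ (q / 2)))
      = ENNReal.ofReal Γi * IS := by
    have hc : ∀ j : ℤ, (0:ℝ) < 1 + ((j:ℝ) * τ) ^ 2 := fun j => by positivity
    have hint : ∀ j : ℤ, IntegrableOn
        (fun u : ℝ => τ * (u ^ (q/2 - 1) * Real.exp (-((1 + ((j:ℝ) * τ) ^ 2) * u)))) (Ioi 0) :=
      fun j => (aux_int hq2 (hc j)).const_mul τ
    have hnn : ∀ j : ℤ, (0 : ℝ → ℝ) ≤ᵐ[volume.restrict (Ioi 0)]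
        (fun u : ℝ => τ * (u ^ (q/2 - 1) * Real.exp (-((1 + ((j:ℝ) * τ) ^ 2) * u)))) := by
      intro j
      refine (ae_restrict_iff' measurableSet_Ioi).mpr (Filter.Eventually.of_forall fun u hu => ?_)
      have : (0:ℝ) < u := hu
      positivity
    have hrepj : ∀ j : ℤ, τ / (1 + ((j:ℝ) * τ) ^ 2) ^ (q / 2)
        = Γi * ∫ u in Ioi (0:ℝ), τ * (u ^ (q/2 - 1) * Real.exp (-((1 + ((j:ℝ) * τ) ^ 2) * u))) := by
      intro j
      rw [integral_const_mul]
      have h := aux_gamma_rep hq2 (hc j)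
      calc τ / (1 + ((j:ℝ) * τ) ^ 2) ^ (q / 2)
          = τ * (1 + ((j:ℝ) * τ) ^ 2) ^ (-(q / 2)) := by
            rw [Real.rpow_neg (hc j).le, div_eq_mul_inv]
        _ = τ * (Γi * ∫ u in Ioi (0:ℝ),
              u ^ (q/2 - 1) * Real.exp (-((1 + ((j:ℝ) * τ) ^ 2) * u))) := by rw [h]
        _ = _ := by ring
    have hmeasj : ∀ j : ℤ, AEMeasurable (fun u : ℝ =>
        ENNReal.ofReal (τ * (u ^ (q/2 - 1) * Real.exp (-((1 + ((j:ℝ) * τ) ^ 2) * u)))))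
        (volume.restrict (Ioi 0)) := by
      intro j
      apply Measurable.aemeasurable
      apply ENNReal.measurable_ofReal.comp
      fun_prop
    calc (∑' j : ℤ, ENNReal.ofReal (τ / (1 + ((j:ℝ) * τ) ^ 2) ^ (q / 2)))
        = ∑' j : ℤ, ENNReal.ofReal Γi * ∫⁻ u in Ioi (0:ℝ),
            ENNReal.ofReal (τ * (u ^ (q/2 - 1) * Real.exp (-((1 + ((j:ℝ) * τ) ^ 2) * u)))) := by
          refine tsum_congr fun j => ?_
          rw [hrepj j, ENNReal.ofReal_mul hΓi,
            ofReal_integral_eq_lintegral_ofReal (hint j) (hnn j)]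
      _ = ENNReal.ofReal Γi * ∑' j : ℤ, ∫⁻ u in Ioi (0:ℝ),
            ENNReal.ofReal (τ * (u ^ (q/2 - 1) * Real.exp (-((1 + ((j:ℝ) * τ) ^ 2) * u)))) :=
          ENNReal.tsum_mul_left
      _ = ENNReal.ofReal Γi * IS := by rw [hISdef, ← lintegral_tsum hmeasj]
  have hIAtop : IA ≠ ⊤ := by
    have hbase : IntegrableOn (fun u : ℝ => Real.sqrt π *
        (u ^ (q/2 - 1/2 - 1) * Real.exp (-(1 * u)))) (Ioi 0) :=
      (aux_int (a := q/2 - 1/2) (c := 1) (by linarith) one_pos).const_mul _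
    have hWint : IntegrableOn
        (fun u : ℝ => u ^ (q/2 - 1) * Real.exp (-u) * Real.sqrt (π / u)) (Ioi 0) := by
      refine hbase.congr_fun (fun u hu => ?_) measurableSet_Ioi
      have hu0 : (0:ℝ) < u := hu
      beta_reduce
      rw [Real.sqrt_div pi_nonneg, Real.sqrt_eq_rpow u,
        show q/2 - 1/2 - 1 = q/2 - 1 - 1/2 by ring, Real.rpow_sub hu0 (q/2 - 1) (1/2), one_mul]
      ring
    have hnn : (0 : ℝ → ℝ) ≤ᵐ[volume.restrict (Ioi 0)]
        (fun u : ℝ => u ^ (q/2 - 1) * Real.exp (-u) * Real.sqrt (π / u)) := by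
      refine (ae_restrict_iff' measurableSet_Ioi).mpr (Filter.Eventually.of_forall fun u hu => ?_)
      have : (0:ℝ) < u := hu
      positivity
    exact ((hasFiniteIntegral_iff_ofReal hnn).mp hWint.hasFiniteIntegral).ne
  have hlt : IA < IS := by
    have hgmeas : Measurable (fun u : ℝ => ∑' j : ℤ,
        ENNReal.ofReal (τ * (u ^ (q/2 - 1) *
          Real.exp (-((1 + ((j:ℝ) * τ) ^ 2) * u))))) := by
      apply Measurable.ennreal_tsum
      intro j
      apply ENNReal.measurable_ofReal.comp
      fun_prop
    refine setLIntegral_strict_mono measurableSet_Ioi (by simp) hgmeas hIAtop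
      (Filter.Eventually.of_forall fun u hu => ?_)
    have hu0 : (0:ℝ) < u := hu
    have hb : (0:ℝ) < u * τ ^ 2 := by positivity
    set Θ : ℝ := ∑' j : ℤ, Real.exp (-(u * τ ^ 2) * (j:ℝ) ^ 2) with hΘdef
    have hΘsum : Summable (fun j : ℤ => Real.exp (-(u * τ ^ 2) * (j:ℝ) ^ 2)) :=
      aux_summable_exp hb
    have hθ : Real.sqrt (π / (u * τ ^ 2)) < Θ := aux_theta hb
    have hkey : Real.sqrt (π / u) < τ * Θ := by
      have heq : τ * Real.sqrt (π / (u * τ ^ 2)) = Real.sqrt (π / u) := by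
        rw [← Real.sqrt_sq hτ.le, ← Real.sqrt_mul (by positivity)]
        congr 1
        field_simp
        rw [Real.sq_sqrt (by positivity)]
      calc Real.sqrt (π / u) = τ * Real.sqrt (π / (u * τ ^ 2)) := heq.symm
        _ < τ * Θ := by exact mul_lt_mul_of_pos_left hθ hτ
    have hdecomp : ∀ j : ℤ, τ * (u ^ (q/2 - 1) * Real.exp (-((1 + ((j:ℝ) * τ) ^ 2) * u)))
        = (τ * (u ^ (q/2 - 1) * Real.exp (-u))) * Real.exp (-(u * τ ^ 2) * (j:ℝ) ^ 2) := by
      intro j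
      rw [show -((1 + ((j:ℝ) * τ) ^ 2) * u) = -u + -(u * τ ^ 2) * (j:ℝ) ^ 2 by ring,
        Real.exp_add]
      ring
    have hc0 : (0:ℝ) ≤ τ * (u ^ (q/2 - 1) * Real.exp (-u)) := by positivity
    have hsumeq : (∑' j : ℤ, ENNReal.ofReal (τ * (u ^ (q/2 - 1) *
          Real.exp (-((1 + ((j:ℝ) * τ) ^ 2) * u)))))
        = ENNReal.ofReal ((τ * (u ^ (q/2 - 1) * Real.exp (-u))) * Θ) := by
      simp_rw [hdecomp, ENNReal.ofReal_mul hc0]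
      rw [ENNReal.tsum_mul_left,
        ← ENNReal.ofReal_tsum_of_nonneg (fun j => (Real.exp_pos _).le) hΘsum,
        ← ENNReal.ofReal_mul hc0]
    rw [hsumeq]
    apply ENNReal.ofReal_lt_ofReal_iff_of_nonneg (by positivity) |>.mpr
    have hcpos : (0:ℝ) < u ^ (q/2 - 1) * Real.exp (-u) := by positivity
    calc u ^ (q/2 - 1) * Real.exp (-u) * Real.sqrt (π / u)
        < u ^ (q/2 - 1) * Real.exp (-u) * (τ * Θ) := by
          exact mul_lt_mul_of_pos_left hkey hcpos
      _ = (τ * (u ^ (q/2 - 1) * Real.exp (-u))) * Θ := by ring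
  -- assemble
  have hm : ENNReal.ofReal Γi * IA < ENNReal.ofReal Γi * IS := by
    rw [ENNReal.mul_lt_mul_iff_right (by simp [ENNReal.ofReal_pos.mpr hΓipos, ne_of_gt]
      : ENNReal.ofReal Γi ≠ 0) ENNReal.ofReal_ne_top]
    exact hlt
  have hSofReal : (∑' j : ℤ, ENNReal.ofReal (τ / (1 + ((j:ℝ) * τ) ^ 2) ^ (q / 2)))
      = ENNReal.ofReal (∑' j : ℤ, τ / (1 + ((j:ℝ) * τ) ^ 2) ^ (q / 2)) :=
    (ENNReal.ofReal_tsum_of_nonneg (fun j => by positivity) hSummable).symm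
  have hcont : Continuous (fun s : ℝ => (1 + s ^ 2) ^ (-q / 2)) := by
    apply Continuous.rpow_const
    · exact continuous_const.add (continuous_pow 2)
    · intro x
      exact Or.inl (by positivity)
  have hAeq : (∫ s : ℝ, (1 + s ^ 2) ^ (-q / 2))
      = (∫⁻ s : ℝ, ENNReal.ofReal ((1 + s ^ 2) ^ (-q / 2))).toReal := by
    rw [integral_eq_lintegral_of_nonneg_ae (Filter.Eventually.of_forall fun s => by positivity)
      hcont.aestronglyMeasurable]
  have hfinal : (∫⁻ s : ℝ, ENNReal.ofReal ((1 + s ^ 2) ^ (-q / 2)))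
      < ENNReal.ofReal (∑' j : ℤ, τ / (1 + ((j:ℝ) * τ) ^ 2) ^ (q / 2)) := by
    rw [hA', ← hSofReal, hS']
    exact hm
  have htopS : ENNReal.ofReal (∑' j : ℤ, τ / (1 + ((j:ℝ) * τ) ^ 2) ^ (q / 2)) ≠ ⊤ :=
    ENNReal.ofReal_ne_top
  have := ENNReal.toReal_strict_mono htopS hfinal
  rw [ENNReal.toReal_ofReal (tsum_nonneg fun j => by positivity)] at this
  rw [hAeq]
  exact this
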